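/- A Hausdorff topological space X is developable at non-isolated points if and only if X has a pair-network 𝒫 = ⋃_{n∈ℕ} 𝒫_n satisfying: (i) for every n, ℐ_Δ(X) ⊆ 𝒫_n and P′ ⊆ X^d for every pair (P′, P″) ∈ 𝒫_n \ ℐ_Δ(X); (ii) for every n, the family 𝒫_n′|_{X^d} consists of sets closed in X^d and is hereditarily closure-preserving in X^d; (iii) for every x ∈ U with U open in X, there exists m with x ∈ st°(x, 𝒫_m) ⊆ U. -/

import Mathlib

open Set Topology Filter Function

/-- `st(x, 𝒰) = ⋃ {P ∈ 𝒰 : x ∈ P}`. -/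
def stpt {X : Type*} (x : X) (𝒰 : Set (Set X)) : Set X := ⋃₀ {P ∈ 𝒰 | x ∈ P}

/-- The set `X^d` of non-isolated points of `X`. -/
def nonIsolatedPoints (X : Type*) [TopologicalSpace X] : Set X :=
  {x : X | ¬IsOpen ({x} : Set X)}

/-- A development at non-isolated points: a sequence of open covers of `X` such that
the stars at each non-isolated point form a neighborhood base there. -/
def IsDevelopmentAtNonIsolatedPoints {X : Type*} [TopologicalSpace X]
    (𝒰 : ℕ → Set (Set X)) : Prop :=
  (∀ n, ∀ P ∈ 𝒰 n, IsOpen P) ∧ (∀ n, ⋃₀ 𝒰 n = Set.univ) ∧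
    ∀ x ∈ nonIsolatedPoints X, ∀ U : Set X, x ∈ U → IsOpen U →
      ∃ n, stpt x (𝒰 n) ⊆ U

/-- A quasi-development for `X`. -/
def IsQuasiDevelopment {X : Type*} [TopologicalSpace X] (𝒰 : ℕ → Set (Set X)) : Prop :=
  (∀ n, ∀ P ∈ 𝒰 n, IsOpen P) ∧
    ∀ (x : X) (U : Set X), x ∈ U → IsOpen U →
      ∃ n, x ∈ stpt x (𝒰 n) ∧ stpt x (𝒰 n) ⊆ U

/-- A `g`-function for `X`. -/
def IsGFunction {X : Type*} [TopologicalSpace X] (g : ℕ → X → Set X) : Prop :=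
  (∀ n x, IsOpen (g n x)) ∧ (∀ n x, x ∈ g n x) ∧ ∀ n x, g (n + 1) x ⊆ g n x

/-- `st(x, 𝒰)` for a pair-family `𝒰`. -/
def pairSt {X : Type*} (x : X) (𝒰 : Set (Set X × Set X)) : Set X :=
  ⋃₀ {S | ∃ P ∈ 𝒰, x ∈ P.1 ∧ S = P.2}

/-- `st(A, 𝒰)` for a pair-family `𝒰`. -/
def pairStSet {X : Type*} (A : Set X) (𝒰 : Set (Set X × Set X)) : Set X :=
  ⋃₀ {S | ∃ P ∈ 𝒰, (A ∩ P.1).Nonempty ∧ S = P.2}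

/-- A pair-network for `X`. -/
def IsPairNetwork {X : Type*} [TopologicalSpace X] (𝒰 : Set (Set X × Set X)) : Prop :=
  (∀ P ∈ 𝒰, P.1 ⊆ P.2) ∧
    ∀ (x : X) (U : Set X), x ∈ U → IsOpen U → ∃ P ∈ 𝒰, x ∈ P.1 ∧ P.2 ⊆ U

/-- `𝒰′|_D = {P′ ∩ D : P ∈ 𝒰}`. -/
def firstCoordRestrict {X : Type*} (𝒰 : Set (Set X × Set X)) (D : Set X) : Set (Set X) :=
  (fun P : Set X × Set X => P.1 ∩ D) '' 𝒰

/-- A family of subsets of `X` consists of sets closed in the subspace `D` and is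
locally finite in the subspace `D`. -/
def IsClosedLocallyFiniteIn {X : Type*} [TopologicalSpace X]
    (ℱ : Set (Set X)) (D : Set X) : Prop :=
  (∀ S ∈ ℱ, IsClosed {z : ↥D | (z : X) ∈ S}) ∧
    ∀ z : ↥D, ∃ V : Set X, IsOpen V ∧ (z : X) ∈ V ∧ {S ∈ ℱ | (S ∩ V).Nonempty}.Finite

/-- `ℐ_Δ(X) = {({x}, {x}) : x isolated in X}`. -/
def pairDiag (X : Type*) [TopologicalSpace X] : Set (Set X × Set X) :=
  {P | ∃ x : X, IsOpen ({x} : Set X) ∧ P = (({x} : Set X), ({x} : Set X))}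

/-- A family of subsets of `X`, all contained in `D`, is hereditarily
closure-preserving in the subspace `D` (closures in `D` are expressed as ambient
closures intersected with `D`). -/
def IsHereditarilyClosurePreservingIn {X : Type*} [TopologicalSpace X]
    (ℱ : Set (Set X)) (D : Set X) : Prop :=
  ∀ H : Set X → Set X, (∀ S ∈ ℱ, H S ⊆ S) →
    closure (⋃ S ∈ ℱ, H S) ∩ D = ⋃ S ∈ ℱ, (closure (H S) ∩ D)

set_option linter.unusedSectionVars false
section AuxCor24
variable {X : Type*} [TopologicalSpace X]

lemma mem_stpt {x w : X} {𝒰 : Set (Set X)} : w ∈ stpt x 𝒰 ↔ ∃ P ∈ 𝒰, x ∈ P ∧ w ∈ P := by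
  constructor
  · rintro ⟨P, ⟨hP, hx⟩, hw⟩
    exact ⟨P, hP, hx, hw⟩
  · rintro ⟨P, hP, hx, hw⟩
    exact ⟨P, ⟨hP, hx⟩, hw⟩

lemma mem_pairSt {x w : X} {𝒰 : Set (Set X × Set X)} :
    w ∈ pairSt x 𝒰 ↔ ∃ P ∈ 𝒰, x ∈ P.1 ∧ w ∈ P.2 := by
  constructor
  · rintro ⟨S, ⟨P, hP, hx, rfl⟩, hw⟩
    exact ⟨P, hP, hx, hw⟩
  · rintro ⟨P, hP, hx, hw⟩
    exact ⟨P.2, ⟨P, hP, hx, rfl⟩, hw⟩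

lemma isClosed_nonIsolatedPoints : IsClosed (nonIsolatedPoints X) := by
  rw [← isOpen_compl_iff, isOpen_iff_mem_nhds]
  intro x hx
  simp only [mem_compl_iff, nonIsolatedPoints, mem_setOf_eq, not_not] at hx
  exact mem_of_superset (hx.mem_nhds rfl) (by
    intro y hy
    simp only [mem_singleton_iff] at hy
    subst hy
    simpa [nonIsolatedPoints] using hx)

lemma closure_inter_subset_of_subtypeClosed {S D : Set X} (hSD : S ⊆ D)
    (h : IsClosed {z : ↥D | (z : X) ∈ S}) : closure S ∩ D ⊆ S := by
  have : {z : ↥D | (z : X) ∈ S} = (Subtype.val : ↥D → X) ⁻¹' S := rfl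
  rw [this] at h
  obtain ⟨C, hC, hCpre⟩ := isClosed_induced_iff.mp h
  have hiff : ∀ d ∈ D, (d ∈ C ↔ d ∈ S) := by
    intro d hd
    constructor
    · intro hdC
      have : (⟨d, hd⟩ : ↥D) ∈ (Subtype.val : ↥D → X) ⁻¹' C := hdC
      rw [hCpre] at this; exact this
    · intro hdS
      have : (⟨d, hd⟩ : ↥D) ∈ (Subtype.val : ↥D → X) ⁻¹' S := hdS
      rw [← hCpre] at this; exact this
  rintro z ⟨hz, hzD⟩
  have hSC : S ⊆ C := fun s hs => (hiff s (hSD hs)).mpr hs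
  have : z ∈ C := (hC.closure_subset_iff.mpr hSC) hz
  exact (hiff z hzD).mp this

/-- A family that is locally finite at all points of `D` is hereditarily
closure-preserving in `D`. -/
lemma hcp_of_locallyFinite {ℒ : Set (Set X)} {D : Set X}
    (h : ∀ z ∈ D, ∃ V : Set X, IsOpen V ∧ z ∈ V ∧ {S ∈ ℒ | (S ∩ V).Nonempty}.Finite) :
    IsHereditarilyClosurePreservingIn ℒ D := by
  intro H hH
  apply Subset.antisymm
  · rintro z ⟨hz, hzD⟩
    obtain ⟨V, hVo, hzV, hVfin⟩ := h z hzD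
    set 𝒢 := {S ∈ ℒ | (S ∩ V).Nonempty} with h𝒢
    have hsplit : (⋃ S ∈ ℒ, H S) ⊆ (⋃ S ∈ 𝒢, H S) ∪ Vᶜ := by
      rintro w hw
      simp only [mem_iUnion] at hw
      obtain ⟨S, hS, hwS⟩ := hw
      by_cases hwV : w ∈ V
      · left
        have : S ∈ 𝒢 := ⟨hS, ⟨w, hH S hS hwS, hwV⟩⟩
        exact mem_biUnion this hwS
      · right; exact hwV
    have hz' : z ∈ closure ((⋃ S ∈ 𝒢, H S) ∪ Vᶜ) := closure_mono hsplit hz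
    rw [closure_union] at hz'
    have hzc : z ∉ closure Vᶜ := by
      rw [hVo.isClosed_compl.closure_eq]; exact fun hc => hc hzV
    have hz2 : z ∈ closure (⋃ S ∈ 𝒢, H S) := hz'.resolve_right hzc
    rw [Set.Finite.closure_biUnion hVfin] at hz2
    simp only [mem_iUnion] at hz2
    obtain ⟨S, hS𝒢, hzS⟩ := hz2
    exact mem_biUnion hS𝒢.1 ⟨hzS, hzD⟩
  · refine iUnion₂_subset fun S hS => ?_
    rintro z ⟨hz, hzD⟩
    exact ⟨closure_mono (subset_biUnion_of_mem (u := fun S => H S) hS) hz, hzD⟩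

end AuxCor24

lemma cor24_forward {X : Type*} [TopologicalSpace X]
    (hdev : ∃ 𝒰 : ℕ → Set (Set X), IsDevelopmentAtNonIsolatedPoints 𝒰) :
    ∃ 𝒰 : ℕ → Set (Set X × Set X),
        IsPairNetwork (⋃ n, 𝒰 n) ∧
        (∀ n, pairDiag X ⊆ 𝒰 n ∧
          ∀ P ∈ 𝒰 n \ pairDiag X, P.1 ⊆ nonIsolatedPoints X) ∧
        (∀ n, (∀ S ∈ firstCoordRestrict (𝒰 n) (nonIsolatedPoints X),
            IsClosed {z : ↥(nonIsolatedPoints X) | (z : X) ∈ S}) ∧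
          IsHereditarilyClosurePreservingIn
            (firstCoordRestrict (𝒰 n) (nonIsolatedPoints X)) (nonIsolatedPoints X)) ∧
        (∀ (x : X) (U : Set X), x ∈ U → IsOpen U →
          ∃ m, x ∈ interior (pairSt x (𝒰 m)) ∧ interior (pairSt x (𝒰 m)) ⊆ U) := by
  classical
  obtain ⟨𝒰, hopen, hcov, hstar⟩ := hdev
  set D := nonIsolatedPoints X with hDdef
  set r : Set X → Set X → Prop := WellOrderingRel with hrdef
  haveI hwo : IsWellOrder (Set X) r := WellOrderingRel.isWellOrder
  -- every point is in some member of each cover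
  have hcov' : ∀ (m : ℕ) (x : X), ∃ W ∈ 𝒰 m, x ∈ W := by
    intro m x
    have : x ∈ ⋃₀ 𝒰 m := by rw [hcov m]; trivial
    obtain ⟨W, hW, hxW⟩ := this
    exact ⟨W, hW, hxW⟩
  have hmemstar : ∀ (m : ℕ) (x : X), x ∈ stpt x (𝒰 m) := by
    intro m x
    obtain ⟨W, hW, hxW⟩ := hcov' m x
    exact ⟨W, ⟨hW, hxW⟩, hxW⟩
  have hstpt_sub : ∀ (m : ℕ) (x : X) (W : Set X), W ∈ 𝒰 m → x ∈ W → W ⊆ stpt x (𝒰 m) := by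
    intro m x W hW hxW w hw
    exact ⟨W, ⟨hW, hxW⟩, hw⟩
  -- the construction
  set prev : ℕ → Set X → Set X := fun n V => ⋃₀ {W | W ∈ 𝒰 n ∧ r W V} with hprevdef
  set Tv : ℕ → Set X → Set X := fun m V => {z | z ∈ D ∧ stpt z (𝒰 m) ⊆ V} with hTvdef
  set Sv : ℕ → ℕ → Set X → Set X := fun n m V => Tv m V \ prev n V with hSvdef
  set Pfam : ℕ → ℕ → Set (Set X × Set X) :=
    fun n m => pairDiag X ∪ {p | ∃ V ∈ 𝒰 n, p = (Sv n m V, V)} with hPfamdef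
  have hprev_open : ∀ n V, IsOpen (prev n V) := by
    intro n V
    apply isOpen_sUnion
    rintro W ⟨hW, -⟩
    exact hopen n W hW
  -- minimal member of 𝒰 n containing x
  have hmin : ∀ (n : ℕ) (x : X), ∃ V₀, V₀ ∈ 𝒰 n ∧ x ∈ V₀ ∧
      ∀ V ∈ 𝒰 n, x ∈ V → ¬ r V V₀ := by
    intro n x
    obtain ⟨W, hW, hxW⟩ := hcov' n x
    have hne : {V | V ∈ 𝒰 n ∧ x ∈ V}.Nonempty := ⟨W, hW, hxW⟩
    have wf : WellFounded r := IsWellFounded.wf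
    exact ⟨wf.min _ hne, (wf.min_mem _ hne).1, (wf.min_mem _ hne).2,
      fun V hV hxV => wf.not_lt_min _ (show V ∈ {V | V ∈ 𝒰 n ∧ x ∈ V} from ⟨hV, hxV⟩)⟩
  -- key uniqueness
  have hkey : ∀ (n m : ℕ) (V V₀ : Set X) (y z : X) (W : Set X),
      V ∈ 𝒰 n → y ∈ Sv n m V → W ∈ 𝒰 m → y ∈ W → z ∈ W →
      y ∈ V₀ → V₀ ∈ 𝒰 n → (∀ V' ∈ 𝒰 n, z ∈ V' → ¬ r V' V₀) → V = V₀ := by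
    intro n m V V₀ y z W hV hySv hW hyW hzW hyV₀ hV₀ hminz
    obtain ⟨⟨hyD, hystar⟩, hyprev⟩ := hySv
    have hWV : W ⊆ V := fun w hw => hystar (hstpt_sub m y W hW hyW hw)
    have hzV : z ∈ V := hWV hzW
    have h1 : ¬ r V V₀ := hminz V hV hzV
    have h2 : ¬ r V₀ V := fun hr => hyprev ⟨V₀, ⟨hV₀, hr⟩, hyV₀⟩
    rcases trichotomous_of r V V₀ with h | h | h
    · exact absurd h h1
    · exact h
    · exact absurd h h2
  have hSv_subT : ∀ n m V, Sv n m V ⊆ Tv m V := fun n m V z hz => hz.1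
  have hSv_subV : ∀ n m V, Sv n m V ⊆ V := by
    intro n m V z hz
    exact hz.1.2 (hmemstar m z)
  have hSv_subD : ∀ n m V, Sv n m V ⊆ D := fun n m V z hz => hz.1.1
  refine ⟨fun j => Pfam (Nat.unpair j).1 (Nat.unpair j).2, ⟨?_, ?_⟩, ?_, ?_, ?_⟩
  · -- P.1 ⊆ P.2
    rintro P hP
    rw [mem_iUnion] at hP
    obtain ⟨j, hPj⟩ := hP
    rcases hPj with hPd | ⟨V, hV, rfl⟩
    · obtain ⟨t, -, rfl⟩ := hPd
      exact subset_rfl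
    · exact hSv_subV _ _ V
  · -- network property
    intro x U hxU hU
    by_cases hx : x ∈ D
    · obtain ⟨n, hn⟩ := hstar x hx U hxU hU
      obtain ⟨V₀, hV₀, hxV₀, hminx⟩ := hmin n x
      have hV₀U : V₀ ⊆ U := fun w hw => hn (hstpt_sub n x V₀ hV₀ hxV₀ hw)
      obtain ⟨m, hm⟩ := hstar x hx V₀ hxV₀ (hopen n V₀ hV₀)
      refine ⟨(Sv n m V₀, V₀), ?_, ?_, hV₀U⟩
      · rw [mem_iUnion]
        refine ⟨Nat.pair n m, ?_⟩
        simp only [Nat.unpair_pair]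
        exact Or.inr ⟨V₀, hV₀, rfl⟩
      · refine ⟨⟨hx, hm⟩, ?_⟩
        rintro ⟨W, ⟨hW, hrW⟩, hxW⟩
        exact hminx W hW hxW hrW
    · have hxo : IsOpen ({x} : Set X) := not_not.mp hx
      refine ⟨(({x} : Set X), ({x} : Set X)), ?_, rfl, by simpa using hxU⟩
      rw [mem_iUnion]
      exact ⟨0, Or.inl ⟨x, hxo, rfl⟩⟩
  · -- condition (i)
    intro j
    refine ⟨subset_union_left, ?_⟩
    rintro P ⟨hP, hPnd⟩
    rcases hP with hPd | ⟨V, hV, rfl⟩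
    · exact absurd hPd hPnd
    · exact hSv_subD _ _ V
  · -- condition (ii)
    intro j
    set n := (Nat.unpair j).1
    set m := (Nat.unpair j).2
    constructor
    · -- closedness
      rintro S ⟨P, hP, rfl⟩
      rcases hP with hPd | ⟨V, hV, rfl⟩
      · -- diagonal pair: the restricted set is empty
        obtain ⟨t, hto, rfl⟩ := hPd
        have : {z : ↥D | (z : X) ∈ ((({t} : Set X), ({t} : Set X)) : Set X × Set X).1 ∩ D} = ∅ := by
          ext z
          simp only [mem_setOf_eq, mem_empty_iff_false, iff_false, mem_inter_iff,
            mem_singleton_iff, not_and]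
          rintro rfl
          exact fun h => h hto
        rw [this]
        exact isClosed_empty
      · -- Sv pair
        have hTclosed : IsClosed ((Subtype.val : ↥D → X) ⁻¹' (Tv m V)) := by
          rw [← isOpen_compl_iff]
          have hGopen : IsOpen (⋃₀ {W | W ∈ 𝒰 m ∧ ¬ W ⊆ V}) := by
            apply isOpen_sUnion
            rintro W ⟨hW, -⟩
            exact hopen m W hW
          have hcompl : ((Subtype.val : ↥D → X) ⁻¹' (Tv m V))ᶜ =
              (Subtype.val : ↥D → X) ⁻¹' (⋃₀ {W | W ∈ 𝒰 m ∧ ¬ W ⊆ V}) := by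
            ext z
            simp only [mem_compl_iff, mem_preimage, mem_sUnion]
            constructor
            · intro hz
              have : ¬ stpt (z : X) (𝒰 m) ⊆ V := fun hsub => hz ⟨z.2, hsub⟩
              obtain ⟨w, hw, hwV⟩ := not_subset.mp this
              obtain ⟨W, ⟨hW, hzW⟩, hwW⟩ := hw
              exact ⟨W, ⟨hW, fun hWV => hwV (hWV hwW)⟩, hzW⟩
            · rintro ⟨W, ⟨hW, hWV⟩, hzW⟩ ⟨-, hsub⟩
              exact hWV (fun w hw => hsub (hstpt_sub m (z : X) W hW hzW hw))
          rw [hcompl]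
          exact hGopen.preimage continuous_subtype_val
        have hPrevClosed : IsClosed ((Subtype.val : ↥D → X) ⁻¹' (prev n V)ᶜ) := by
          rw [preimage_compl, ← isOpen_compl_iff, compl_compl]
          exact (hprev_open n V).preimage continuous_subtype_val
        have heq : {z : ↥D | (z : X) ∈ ((Sv n m V, V) : Set X × Set X).1 ∩ D} =
            ((Subtype.val : ↥D → X) ⁻¹' (Tv m V)) ∩ ((Subtype.val : ↥D → X) ⁻¹' (prev n V)ᶜ) := by
          ext z
          simp only [mem_setOf_eq, mem_inter_iff, mem_preimage, mem_compl_iff]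
          constructor
          · rintro ⟨⟨h1, h2⟩, -⟩
            exact ⟨h1, h2⟩
          · rintro ⟨h1, h2⟩
            exact ⟨⟨h1, h2⟩, z.2⟩
        rw [heq]
        exact hTclosed.inter hPrevClosed
    · -- HCP via local finiteness
      apply hcp_of_locallyFinite
      intro z hzD
      obtain ⟨W, hW, hzW⟩ := hcov' m z
      obtain ⟨V₀, hV₀, hzV₀, hminz⟩ := hmin n z
      refine ⟨V₀ ∩ W, (hopen n V₀ hV₀).inter (hopen m W hW), ⟨hzV₀, hzW⟩, ?_⟩
      apply Set.Finite.subset (finite_singleton (Sv n m V₀ ∩ D))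
      rintro S ⟨⟨P, hP, rfl⟩, ⟨y, hyS, hyV₀, hyW⟩⟩
      rcases hP with hPd | ⟨V, hV, rfl⟩
      · obtain ⟨t, hto, rfl⟩ := hPd
        obtain ⟨hyt, hyD⟩ := hyS
        rcases hyt with rfl
        exact absurd hto hyD
      · have : V = V₀ := hkey n m V V₀ y z W hV hyS.1 hW hyW hzW hyV₀ hV₀ hminz
        rw [this]
        rfl
  · -- condition (iii)
    intro x U hxU hU
    by_cases hx : x ∈ D
    · obtain ⟨n, hn⟩ := hstar x hx U hxU hU
      obtain ⟨V₀, hV₀, hxV₀, hminx⟩ := hmin n x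
      have hV₀U : V₀ ⊆ U := fun w hw => hn (hstpt_sub n x V₀ hV₀ hxV₀ hw)
      obtain ⟨m, hm⟩ := hstar x hx V₀ hxV₀ (hopen n V₀ hV₀)
      refine ⟨Nat.pair n m, ?_⟩
      simp only [Nat.unpair_pair]
      have hxSv : x ∈ Sv n m V₀ := by
        refine ⟨⟨hx, hm⟩, ?_⟩
        rintro ⟨W, ⟨hW, hrW⟩, hxW⟩
        exact hminx W hW hxW hrW
      have heq : pairSt x (Pfam n m) = V₀ := by
        apply Subset.antisymm
        · intro w hw
          rw [mem_pairSt] at hw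
          obtain ⟨P, hP, hxP, hwP⟩ := hw
          rcases hP with hPd | ⟨V, hV, rfl⟩
          · obtain ⟨t, hto, rfl⟩ := hPd
            rcases hxP with rfl
            exact absurd hto hx
          · obtain ⟨Wm, hWm, hxWm⟩ := hcov' m x
            have : V = V₀ := hkey n m V V₀ x x Wm hV hxP hWm hxWm hxWm hxV₀ hV₀ hminx
            rw [← this]
            exact hwP
        · intro w hw
          exact mem_pairSt.mpr ⟨(Sv n m V₀, V₀), Or.inr ⟨V₀, hV₀, rfl⟩, hxSv, hw⟩
      rw [heq, (hopen n V₀ hV₀).interior_eq]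
      exact ⟨hxV₀, hV₀U⟩
    · have hxo : IsOpen ({x} : Set X) := not_not.mp hx
      refine ⟨0, ?_⟩
      have heq : pairSt x (Pfam (Nat.unpair 0).1 (Nat.unpair 0).2) = {x} := by
        apply Subset.antisymm
        · intro w hw
          rw [mem_pairSt] at hw
          obtain ⟨P, hP, hxP, hwP⟩ := hw
          rcases hP with hPd | ⟨V, hV, rfl⟩
          · obtain ⟨t, -, rfl⟩ := hPd
            rcases hxP with rfl
            exact hwP
          · exact absurd (hSv_subD _ _ V hxP) hx
        · intro w hw
          exact mem_pairSt.mpr ⟨(({x} : Set X), ({x} : Set X)), Or.inl ⟨x, hxo, rfl⟩, rfl, hw⟩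
      rw [heq, hxo.interior_eq]
      exact ⟨rfl, by simpa using hxU⟩

lemma cor24_backward {X : Type*} [TopologicalSpace X]
    (h : ∃ 𝒰 : ℕ → Set (Set X × Set X),
        IsPairNetwork (⋃ n, 𝒰 n) ∧
        (∀ n, pairDiag X ⊆ 𝒰 n ∧
          ∀ P ∈ 𝒰 n \ pairDiag X, P.1 ⊆ nonIsolatedPoints X) ∧
        (∀ n, (∀ S ∈ firstCoordRestrict (𝒰 n) (nonIsolatedPoints X),
            IsClosed {z : ↥(nonIsolatedPoints X) | (z : X) ∈ S}) ∧
          IsHereditarilyClosurePreservingIn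
            (firstCoordRestrict (𝒰 n) (nonIsolatedPoints X)) (nonIsolatedPoints X)) ∧
        (∀ (x : X) (U : Set X), x ∈ U → IsOpen U →
          ∃ m, x ∈ interior (pairSt x (𝒰 m)) ∧ interior (pairSt x (𝒰 m)) ⊆ U)) :
    ∃ 𝒱 : ℕ → Set (Set X), IsDevelopmentAtNonIsolatedPoints 𝒱 := by
  classical
  obtain ⟨𝒰, ⟨hsub, hnet⟩, hdiag, hii, hiii⟩ := h
  set D := nonIsolatedPoints X with hDdef
  have hDclosed : IsClosed D := isClosed_nonIsolatedPoints
  have hfcr_subD : ∀ (m : ℕ) (S : Set X), S ∈ firstCoordRestrict (𝒰 m) D → S ⊆ D := by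
    rintro m S ⟨P, hP, rfl⟩
    exact inter_subset_right
  have hclosedS : ∀ (m : ℕ) (S : Set X), S ∈ firstCoordRestrict (𝒰 m) D →
      closure S ∩ D ⊆ S := by
    intro m S hS
    exact closure_inter_subset_of_subtypeClosed (hfcr_subD m S hS) ((hii m).1 S hS)
  -- Big m x : union of all first coordinates (restricted to D) missing x
  set Big : ℕ → X → Set X :=
    fun m x => ⋃₀ {S | S ∈ firstCoordRestrict (𝒰 m) D ∧ x ∉ S} with hBigdef
  have hBig_subD : ∀ m x, Big m x ⊆ D := by
    rintro m x w ⟨S, ⟨hS, -⟩, hwS⟩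
    exact hfcr_subD m S hS hwS
  have hBig_closed : ∀ m x, IsClosed (Big m x) := by
    intro m x
    set H : Set X → Set X := fun S => if x ∈ S then ∅ else S with hHdef
    have hH : ∀ S ∈ firstCoordRestrict (𝒰 m) D, H S ⊆ S := by
      intro S _
      by_cases hxS : x ∈ S <;> simp [hHdef, hxS]
    have heq := (hii m).2 H hH
    have hunion : (⋃ S ∈ firstCoordRestrict (𝒰 m) D, H S) = Big m x := by
      ext w
      simp only [mem_iUnion, exists_prop]
      constructor
      · rintro ⟨S, hS, hwS⟩
        by_cases hxS : x ∈ S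
        · simp [hHdef, hxS] at hwS
        · simp only [hHdef, if_neg hxS] at hwS
          exact ⟨S, ⟨hS, hxS⟩, hwS⟩
      · rintro ⟨S, ⟨hS, hxS⟩, hwS⟩
        exact ⟨S, hS, by simp only [hHdef, if_neg hxS]; exact hwS⟩
    rw [hunion] at heq
    have h1 : closure (Big m x) ⊆ D := by
      have := closure_mono (hBig_subD m x)
      rwa [hDclosed.closure_eq] at this
    have h2 : closure (Big m x) ∩ D ⊆ Big m x := by
      rw [heq]
      refine iUnion₂_subset fun S hS => ?_
      by_cases hxS : x ∈ S
      · simp [hHdef, hxS]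
      · have hHS : H S = S := if_neg hxS
        rw [hHS]
        exact (hclosedS m S hS).trans (fun w hw => ⟨S, ⟨hS, hxS⟩, hw⟩)
    have : closure (Big m x) = Big m x :=
      Subset.antisymm (fun w hw => h2 ⟨hw, h1 hw⟩) subset_closure
    rw [← this]
    exact isClosed_closure
  set O : ℕ → X → Set X := fun m x => (Big m x)ᶜ with hOdef
  have hOopen : ∀ m x, IsOpen (O m x) := fun m x => (hBig_closed m x).isOpen_compl
  have hxO : ∀ m x, x ∈ O m x := by
    rintro m x ⟨S, ⟨hS, hxS⟩, hxS'⟩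
    exact hxS hxS'
  have hOtrans : ∀ (m : ℕ) (x z : X), z ∈ O m x →
      ∀ S ∈ firstCoordRestrict (𝒰 m) D, z ∈ S → x ∈ S := by
    intro m x z hz S hS hzS
    by_contra hxS
    exact hz ⟨S, ⟨hS, hxS⟩, hzS⟩
  have hpairSt_mono : ∀ (m : ℕ) (x z : X), z ∈ D →
      (∀ S ∈ firstCoordRestrict (𝒰 m) D, z ∈ S → x ∈ S) →
      pairSt z (𝒰 m) ⊆ pairSt x (𝒰 m) := by
    intro m x z hzD htrans w hw
    rw [mem_pairSt] at hw ⊢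
    obtain ⟨Q, hQ, hzQ, hwQ⟩ := hw
    have hQ1 : Q.1 ∩ D ∈ firstCoordRestrict (𝒰 m) D := ⟨Q, hQ, rfl⟩
    exact ⟨Q, hQ, (htrans _ hQ1 ⟨hzQ, hzD⟩).1, hwQ⟩
  -- the g-function
  set q : ℕ → X → Set X := fun i x =>
    O i x ∩ (if x ∈ interior (pairSt x (𝒰 i)) then interior (pairSt x (𝒰 i)) else univ)
    with hqdef
  have hqopen : ∀ i x, IsOpen (q i x) := by
    intro i x
    apply (hOopen i x).inter
    by_cases hx : x ∈ interior (pairSt x (𝒰 i))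
    · rw [if_pos hx]; exact isOpen_interior
    · rw [if_neg hx]; exact isOpen_univ
  have hxq : ∀ i x, x ∈ q i x := by
    intro i x
    refine ⟨hxO i x, ?_⟩
    by_cases hx : x ∈ interior (pairSt x (𝒰 i))
    · rw [if_pos hx]; exact hx
    · rw [if_neg hx]; trivial
  set g : ℕ → X → Set X := fun n x =>
    if x ∈ D then ⋂ i ∈ Finset.range (n+1), q i x else {x} with hgdef
  have hgD : ∀ (n : ℕ) (x : X), x ∈ D → g n x = ⋂ i ∈ Finset.range (n+1), q i x := by
    intro n x hx
    simp only [hgdef, if_pos hx]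
  have hgI : ∀ (n : ℕ) (x : X), x ∉ D → g n x = {x} := by
    intro n x hx
    simp only [hgdef, if_neg hx]
  have hgopen : ∀ n x, IsOpen (g n x) := by
    intro n x
    by_cases hx : x ∈ D
    · rw [hgD n x hx]
      exact isOpen_biInter_finset fun i _ => hqopen i x
    · rw [hgI n x hx]
      simpa [hDdef, nonIsolatedPoints] using hx
  have hxg : ∀ n x, x ∈ g n x := by
    intro n x
    by_cases hx : x ∈ D
    · rw [hgD n x hx]
      exact mem_iInter₂.mpr fun i _ => hxq i x
    · rw [hgI n x hx]
      exact rfl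
  have hg_sub_q : ∀ (n : ℕ) (x : X), x ∈ D → ∀ i, i ≤ n → g n x ⊆ q i x := by
    intro n x hx i hi
    rw [hgD n x hx]
    intro w hw
    exact mem_iInter₂.mp hw i (Finset.mem_range.mpr (Nat.lt_succ_of_le hi))
  refine ⟨fun n => {V | ∃ x, V = g n x}, ?_, ?_, ?_⟩
  · rintro n V ⟨x, rfl⟩
    exact hgopen n x
  · intro n
    apply eq_univ_of_forall
    intro x
    exact ⟨g n x, ⟨x, rfl⟩, hxg n x⟩
  · intro z hzD U hzU hU
    by_contra hcon
    push_neg at hcon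
    have hsel : ∀ n : ℕ, ∃ (a b : X), z ∈ g n a ∧ b ∈ g n a ∧ b ∉ U := by
      intro n
      obtain ⟨b, hb, hbU⟩ := not_subset.mp (hcon n)
      obtain ⟨V, ⟨⟨a, rfl⟩, hzV⟩, hbV⟩ := hb
      exact ⟨a, b, hzV, hbV, hbU⟩
    choose x y hzg hyg hyU using hsel
    have hxD : ∀ n, x n ∈ D := by
      intro n
      by_contra hx
      have hz' := hzg n
      rw [hgI n (x n) hx] at hz'
      rw [mem_singleton_iff] at hz'
      rw [← hz'] at hx
      exact hx hzD
    have hzq : ∀ (n i : ℕ), i ≤ n → z ∈ q i (x n) := by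
      intro n i hi
      exact hg_sub_q n (x n) (hxD n) i hi (hzg n)
    have hmemtrans : ∀ (n i : ℕ), i ≤ n →
        ∀ S ∈ firstCoordRestrict (𝒰 i) D, z ∈ S → x n ∈ S := by
      intro n i hi S hS hzS
      exact hOtrans i (x n) z (hzq n i hi).1 S hS hzS
    have hconv : ∀ U' : Set X, IsOpen U' → z ∈ U' → ∃ N, ∀ n, N ≤ n → x n ∈ U' := by
      intro U' hU' hzU'
      obtain ⟨m', hm'1, hm'2⟩ := hiii z U' hzU' hU'
      obtain ⟨P, hP, hzP, hPsub⟩ := hnet z _ hm'1 isOpen_interior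
      rw [mem_iUnion] at hP
      obtain ⟨k', hPk'⟩ := hP
      refine ⟨k', fun n hn => ?_⟩
      have hS : P.1 ∩ D ∈ firstCoordRestrict (𝒰 k') D := ⟨P, hPk', rfl⟩
      have hxnP : x n ∈ P.1 ∩ D := hmemtrans n k' hn _ hS ⟨hzP, hzD⟩
      exact hm'2 (hPsub (hsub _ (mem_iUnion.mpr ⟨k', hPk'⟩) hxnP.1))
    obtain ⟨m, hm1, hm2⟩ := hiii z U hzU hU
    -- Lemma C : eventually, membership of `x n` in members of ℱ_m transfers to z
    have hlemC : ∃ N₁, ∀ n, N₁ ≤ n →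
        ∀ S ∈ firstCoordRestrict (𝒰 m) D, x n ∈ S → z ∈ S := by
      by_contra hc
      push_neg at hc
      set B := {n : ℕ | ∃ S ∈ firstCoordRestrict (𝒰 m) D, x n ∈ S ∧ z ∉ S} with hBdef
      have hBunb : ∀ N, ∃ n ∈ B, N ≤ n := by
        intro N
        obtain ⟨n, hnN, S, hS, hxS, hzS⟩ := hc N
        exact ⟨n, ⟨S, hS, hxS, hzS⟩, hnN⟩
      set H : Set X → Set X := fun S => {p | p ∈ S ∧ z ∉ S ∧ ∃ n ∈ B, p = x n} with hHdef
      have hH : ∀ S ∈ firstCoordRestrict (𝒰 m) D, H S ⊆ S := fun S _ p hp => hp.1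
      have heq := (hii m).2 H hH
      have hzcl : z ∈ closure (⋃ S ∈ firstCoordRestrict (𝒰 m) D, H S) := by
        rw [mem_closure_iff]
        intro V hV hzV
        obtain ⟨N, hN⟩ := hconv V hV hzV
        obtain ⟨n, hnB, hnN⟩ := hBunb N
        obtain ⟨S, hS, hxS, hzS⟩ := hnB
        refine ⟨x n, hN n hnN, ?_⟩
        exact mem_biUnion hS ⟨hxS, hzS, n, ⟨S, hS, hxS, hzS⟩, rfl⟩
      have hzmem : z ∈ ⋃ S ∈ firstCoordRestrict (𝒰 m) D, (closure (H S) ∩ D) := by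
        rw [← heq]
        exact ⟨hzcl, hzD⟩
      simp only [mem_iUnion, exists_prop] at hzmem
      obtain ⟨S, hS, hzclS, hzD'⟩ := hzmem
      have hzS : z ∉ S := by
        intro hzS
        have hempty : H S = ∅ := by
          ext p
          simp only [hHdef, mem_setOf_eq, mem_empty_iff_false, iff_false, not_and]
          intro _ h'
          exact absurd hzS h'.elim
        rw [hempty, closure_empty] at hzclS
        exact hzclS
      have : z ∈ S := hclosedS m S hS ⟨closure_mono (hH S hS) hzclS, hzD⟩
      exact hzS this
    obtain ⟨N₁, hN₁⟩ := hlemC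
    obtain ⟨P, hP, hzP, hPsub⟩ := hnet z _ hm1 isOpen_interior
    rw [mem_iUnion] at hP
    obtain ⟨k, hPk⟩ := hP
    set n := max (max m k) N₁ with hndef
    have hnm : m ≤ n := le_trans (le_max_left m k) (le_max_left _ _)
    have hnk : k ≤ n := le_trans (le_max_right m k) (le_max_left _ _)
    have hnN : N₁ ≤ n := le_max_right _ _
    have hxP : x n ∈ P.1 :=
      (hmemtrans n k hnk _ ⟨P, hPk, rfl⟩ ⟨hzP, hzD⟩).1
    have hxint : x n ∈ interior (pairSt z (𝒰 m)) :=
      hPsub (hsub _ (mem_iUnion.mpr ⟨k, hPk⟩) hxP)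
    have h1 : pairSt z (𝒰 m) ⊆ pairSt (x n) (𝒰 m) :=
      hpairSt_mono m (x n) z hzD (fun S hS hzS => hmemtrans n m hnm S hS hzS)
    have h2 : pairSt (x n) (𝒰 m) ⊆ pairSt z (𝒰 m) :=
      hpairSt_mono m z (x n) (hxD n) (fun S hS hxS => hN₁ n hnN S hS hxS)
    have heqP : pairSt (x n) (𝒰 m) = pairSt z (𝒰 m) := Subset.antisymm h2 h1
    have hxself : x n ∈ interior (pairSt (x n) (𝒰 m)) := by
      rw [heqP]
      exact hxint
    have hyint : y n ∈ interior (pairSt (x n) (𝒰 m)) := by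
      have hq' := hg_sub_q n (x n) (hxD n) m hnm (hyg n)
      have := hq'.2
      rwa [if_pos hxself] at this
    rw [heqP] at hyint
    exact hyU n (hm2 hyint)

/-- Corollary 2.4: `X` is developable at non-isolated points iff `X` has a
pair-network `⋃ₙ 𝒰ₙ` satisfying conditions (i)-(iii). -/
theorem corollary_2_4 {X : Type*} [TopologicalSpace X] [T2Space X] :
    (∃ 𝒰 : ℕ → Set (Set X), IsDevelopmentAtNonIsolatedPoints 𝒰) ↔
      ∃ 𝒰 : ℕ → Set (Set X × Set X),
        IsPairNetwork (⋃ n, 𝒰 n) ∧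
        (∀ n, pairDiag X ⊆ 𝒰 n ∧
          ∀ P ∈ 𝒰 n \ pairDiag X, P.1 ⊆ nonIsolatedPoints X) ∧
        (∀ n, (∀ S ∈ firstCoordRestrict (𝒰 n) (nonIsolatedPoints X),
            IsClosed {z : ↥(nonIsolatedPoints X) | (z : X) ∈ S}) ∧
          IsHereditarilyClosurePreservingIn
            (firstCoordRestrict (𝒰 n) (nonIsolatedPoints X)) (nonIsolatedPoints X)) ∧
        (∀ (x : X) (U : Set X), x ∈ U → IsOpen U →
          ∃ m, x ∈ interior (pairSt x (𝒰 m)) ∧ interior (pairSt x (𝒰 m)) ⊆ U) := by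
  constructor
  · exact cor24_forward
  · exact cor24_backward
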